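/- If F is a finite field whose characteristic does not divide n, and C is a direct summand of F[z]^n that is invariant under the cyclic shift (v_0,...,v_{n-1}) ↦ (v_{n-1},v_0,...,v_{n-2}) applied coefficientwise, then C has a constant generator matrix; i.e., C is generated as an F[z]-module by C ∩ F^n. -/

import Mathlib

set_option linter.unusedSectionVars false
open Fin.NatCast Fin.CommRing
section Conv
variable {F : Type} [CommRing F] {n : ℕ} [NeZero n]

def myconv (f g : Fin n → F) : Fin n → F := fun i => ∑ j, f (i - j) * g j

lemma myconv_zero_left (g : Fin n → F) : myconv (0 : Fin n → F) g = 0 := by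
  funext i; simp [myconv]

lemma myconv_add_right (f g h : Fin n → F) :
    myconv f (g + h) = myconv f g + myconv f h := by
  funext i; simp [myconv, mul_add, Finset.sum_add_distrib]

lemma myconv_comm (f g : Fin n → F) : myconv f g = myconv g f := by
  funext i
  exact Fintype.sum_equiv (Equiv.subLeft i) _ _ (fun j => by
    simp [Equiv.subLeft, sub_sub_cancel, mul_comm])

lemma myconv_assoc (f g h : Fin n → F) :
    myconv (myconv f g) h = myconv f (myconv g h) := by
  funext i
  show ∑ j, (∑ k, f (i - j - k) * g k) * h j = ∑ k, f (i - k) * ∑ j, g (k - j) * h j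
  simp_rw [Finset.sum_mul, Finset.mul_sum]
  conv_rhs => rw [Finset.sum_comm]
  refine Finset.sum_congr rfl fun j _ => ?_
  refine Fintype.sum_equiv (Equiv.addRight j) _ _ (fun k => ?_)
  simp only [Equiv.coe_addRight, add_sub_cancel_right]
  rw [sub_add_eq_sub_sub, sub_right_comm, mul_assoc]
end Conv

section Idem
variable {F : Type} [CommRing F] {n : ℕ} [NeZero n]

lemma conv_idem_const (p : Fin n → Polynomial F)
    (hp : ∀ i, ∑ j, p (i - j) * p j = p i) (i : Fin n) :
    p i = Polynomial.C ((p i).coeff 0) := by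
  set c : ℕ → Fin n → F := fun d j => (p j).coeff d with hcdef
  have hc : ∀ d, ∑ ab ∈ Finset.HasAntidiagonal.antidiagonal d, myconv (c ab.1) (c ab.2) = c d := by
    intro d
    funext j
    have := congrArg (fun q => Polynomial.coeff q d) (hp j)
    simp only [Polynomial.finset_sum_coeff, Polynomial.coeff_mul] at this
    rw [Finset.sum_comm] at this
    simpa [myconv, hcdef, Finset.sum_apply] using this
  have h0 : myconv (c 0) (c 0) = c 0 := by
    have := hc 0
    simpa using this
  have hzero : ∀ k : ℕ, c (k + 1) = 0 := by
    intro k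
    induction k using Nat.strong_induction_on with
    | _ k IH =>
      have hk := hc (k + 1)
      rw [Finset.Nat.sum_antidiagonal_eq_sum_range_succ_mk] at hk
      rw [Finset.sum_range_succ, Finset.sum_range_succ'] at hk
      have hmid : ∀ a ∈ Finset.range k, myconv (c (a + 1)) (c (k + 1 - (a + 1))) = 0 := by
        intro a ha
        rw [IH a (Finset.mem_range.mp ha), myconv_zero_left]
      rw [Finset.sum_congr rfl hmid] at hk
      simp only [Finset.sum_const_zero, zero_add, Nat.sub_zero, Nat.sub_self] at hk
      -- hk : myconv (c 0) (c (k+1)) + myconv (c (k+1)) (c 0) = c (k+1)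
      set u := myconv (c 0) (c (k + 1)) with hu
      rw [myconv_comm (c (k+1)) (c 0), ← hu] at hk
      have hu2 : u = u + u := by
        calc u = myconv (c 0) (c (k + 1)) := hu
        _ = myconv (c 0) (u + u) := by rw [hk]
        _ = myconv (c 0) u + myconv (c 0) u := myconv_add_right _ _ _
        _ = u + u := by
            rw [hu, ← myconv_assoc, h0]
      have hu0 : u = 0 := by
        have := hu2.symm
        rwa [add_eq_left] at this
      rw [← hk, hu0, add_zero]
  refine Polynomial.ext fun d => ?_
  cases d with
  | zero => simp
  | succ m =>
    have : c (m + 1) i = 0 := by rw [hzero m]; rfl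
    simp only [hcdef] at this
    simp [this, Polynomial.coeff_C]
end Idem


set_option maxHeartbeats 1000000 in
/-- If F is a finite field whose characteristic does not divide n, and C is a
direct summand of F[z]^n invariant under the cyclic shift applied coefficientwise, then C is
generated as an F[z]-module by its constant vectors (C ∩ F^n). -/
theorem stmt_0 (F : Type) [Field F] [Fintype F] (n : ℕ) [NeZero n]
    (hchar : ¬ (ringChar F ∣ n))
    (C : Submodule (Polynomial F) (Fin n → Polynomial F))
    (hsummand : ∃ D : Submodule (Polynomial F) (Fin n → Polynomial F), IsCompl C D)
    (hshift : ∀ v ∈ C, (fun i : Fin n => v (i - 1)) ∈ C) :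
    C = Submodule.span (Polynomial F)
      {v : Fin n → Polynomial F | v ∈ C ∧ ∀ i : Fin n, ∃ a : F, v i = Polynomial.C a} := by

  set R := Polynomial F
  set M := (Fin n → R)
  obtain ⟨D, hD⟩ := hsummand
  set S : M →ₗ[R] M := LinearMap.funLeft R R (fun i : Fin n => i - 1) with hSdef
  have hSapp : ∀ (v : M) (i : Fin n), S v i = v (i - 1) := fun v i => rfl
  have hSpow : ∀ (k : ℕ) (v : M) (i : Fin n), (S ^ k) v i = v (i - (k : Fin n)) := by
    intro k
    induction k with
    | zero => intro v i; simp
    | succ m IH =>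
      intro v i
      rw [pow_succ', Module.End.mul_apply, hSapp, IH]
      congr 1; push_cast; ring
  have hSn : ∀ v : M, (S ^ n) v = v := by
    intro v; funext i; rw [hSpow]; simp
  have hCS : ∀ v ∈ C, S v ∈ C := fun v hv => hshift v hv
  have hCpow : ∀ (k : ℕ), ∀ v ∈ C, (S ^ k) v ∈ C := by
    intro k
    induction k with
    | zero => intro v hv; simpa using hv
    | succ m IH =>
      intro v hv
      rw [pow_succ, Module.End.mul_apply]
      exact IH _ (hCS v hv)
  set π : M →ₗ[R] M := C.subtype.comp (C.projectionOnto D hD) with hπdef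
  have hπmem : ∀ v : M, π v ∈ C := fun v => (C.projectionOnto D hD v).2
  have hπid : ∀ v ∈ C, π v = v := by
    intro v hv
    show (C.projectionOnto D hD v : M) = v
    rw [Submodule.projectionOnto_apply_left hD ⟨v, hv⟩]
  have hn0 : (n : F) ≠ 0 := by
    intro h
    exact hchar ((CharP.cast_eq_zero_iff F (ringChar F) n).mp h)
  set cn : R := Polynomial.C ((n : F)⁻¹) with hcn
  set T : M →ₗ[R] M :=
    cn • (∑ k ∈ Finset.range n, (S ^ k) ∘ₗ π ∘ₗ (S ^ (n - k))) with hTdef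
  have hTapp : ∀ v : M, T v = cn • ∑ k ∈ Finset.range n, (S ^ k) (π ((S ^ (n - k)) v)) := by
    intro v
    rw [hTdef]
    simp [LinearMap.sum_apply]
  have hTmem : ∀ v : M, T v ∈ C := by
    intro v
    rw [hTapp]
    exact C.smul_mem _ (C.sum_mem fun k _ => hCpow k _ (hπmem _))
  have hTid : ∀ v ∈ C, T v = v := by
    intro v hv
    rw [hTapp]
    have : ∀ k ∈ Finset.range n, (S ^ k) (π ((S ^ (n - k)) v)) = v := by
      intro k hk
      rw [hπid _ (hCpow _ _ hv), ← Module.End.mul_apply, ← pow_add,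
        Nat.add_sub_cancel' (le_of_lt (Finset.mem_range.mp hk)), hSn]
    rw [Finset.sum_congr rfl this, Finset.sum_const, Finset.card_range]
    rw [← Nat.cast_smul_eq_nsmul R, smul_smul, hcn]
    have : (n : R) = Polynomial.C (n : F) := by simp
    rw [this, ← Polynomial.C_mul, inv_mul_cancel₀ hn0, Polynomial.C_1, one_smul]
  -- commutation with S
  have hTS : ∀ v : M, T (S v) = S (T v) := by
    intro v
    set f : ℕ → M := fun j => (S ^ j) (π ((S ^ (n + 1 - j)) v)) with hf
    have h1 : T (S v) = cn • ∑ k ∈ Finset.range n, f k := by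
      rw [hTapp]
      congr 1
      refine Finset.sum_congr rfl fun k hk => ?_
      have hk' : k ≤ n := le_of_lt (Finset.mem_range.mp hk)
      rw [hf]
      have : (S ^ (n - k)) (S v) = (S ^ (n + 1 - k)) v := by
        rw [← Module.End.mul_apply, ← pow_succ, Nat.sub_add_comm hk']
      rw [this]
    have h2 : S (T v) = cn • ∑ k ∈ Finset.range n, f (k + 1) := by
      rw [hTapp, map_smul, map_sum]
      congr 1
      refine Finset.sum_congr rfl fun k hk => ?_
      show S ((S ^ k) (π ((S ^ (n - k)) v))) = (S ^ (k + 1)) (π ((S ^ (n + 1 - (k + 1))) v))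
      have e1 : n + 1 - (k + 1) = n - k := by omega
      rw [e1, ← Module.End.mul_apply, ← pow_succ']
    have hf0 : f 0 = f n := by
      rw [hf]
      show π ((S ^ (n + 1 - 0)) v) = (S ^ n) (π ((S ^ (n + 1 - n)) v))
      rw [show n + 1 - 0 = n + 1 from rfl, show n + 1 - n = 1 from by omega,
        pow_one, pow_succ, Module.End.mul_apply, hSn, hSn]
    have hsum : ∑ k ∈ Finset.range n, f k = ∑ k ∈ Finset.range n, f (k + 1) := by
      have a1 := Finset.sum_range_succ f n
      have a2 := Finset.sum_range_succ' f n
      rw [a1] at a2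
      -- a2 : ∑ range n f + f n = ∑ range n (f ∘ succ) + f 0
      rw [hf0] at a2
      exact add_right_cancel a2
    rw [h1, h2, hsum]
  have hTSpow : ∀ (j : ℕ) (v : M), T ((S ^ j) v) = (S ^ j) (T v) := by
    intro j
    induction j with
    | zero => intro v; simp
    | succ m IH =>
      intro v
      rw [pow_succ', Module.End.mul_apply, Module.End.mul_apply, hTS, IH]
  -- matrix form
  set e : Fin n → M := fun j i => if j = i then 1 else 0 with he
  have hve : ∀ v : M, v = ∑ j, v j • e j := fun v => pi_eq_sum_univ v
  have hSe : ∀ j : Fin n, (S ^ (j : ℕ)) (e 0) = e j := by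
    intro j
    funext i
    rw [hSpow, he]
    simp only [Fin.cast_val_eq_self]
    by_cases h : (0 : Fin n) = i - j
    · rw [if_pos h, if_pos (by rw [eq_comm, ← sub_eq_zero, ← h])]
    · rw [if_neg h, if_neg (fun hji => h (by rw [← hji, sub_self]))]
  set p : Fin n → R := fun j => T (e 0) j with hp
  have hTe : ∀ (j : Fin n) (i : Fin n), T (e j) i = p (i - j) := by
    intro j i
    rw [← hSe j, hTSpow, hSpow, hp, Fin.cast_val_eq_self]
  have hTv : ∀ (v : M) (i : Fin n), T v i = ∑ j, p (i - j) * v j := by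
    intro v i
    conv_lhs => rw [hve v, map_sum]
    rw [Finset.sum_apply]
    refine Finset.sum_congr rfl fun j _ => ?_
    rw [map_smul, Pi.smul_apply, hTe, smul_eq_mul, mul_comm]
  have hPP : ∀ i : Fin n, ∑ j, p (i - j) * p j = p i := by
    intro i
    have h1 : T (T (e 0)) = T (e 0) := hTid _ (hTmem _)
    have h2 := hTv (T (e 0)) i
    rw [h1] at h2
    rw [← h2, hp]
  have hconst : ∀ i : Fin n, ∃ a : F, p i = Polynomial.C a :=
    fun i => ⟨(p i).coeff 0, conv_idem_const p hPP i⟩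
  refine le_antisymm ?_ (Submodule.span_le.mpr fun v hv => hv.1)
  intro v hv
  have hrep : v = ∑ j, v j • T (e j) := by
    calc v = T v := (hTid v hv).symm
      _ = T (∑ j, v j • e j) := by rw [← hve v]
      _ = ∑ j, v j • T (e j) := by
          rw [map_sum]
          exact Finset.sum_congr rfl fun j _ => map_smul T (v j) (e j)
  rw [hrep]
  refine Submodule.sum_mem _ fun j _ => Submodule.smul_mem _ _ (Submodule.subset_span ?_)
  refine ⟨hTmem (e j), fun i => ?_⟩
  obtain ⟨a, ha⟩ := hconst (i - j)
  exact ⟨a, by rw [hTe j i, ha]⟩
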